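/- Let S be the monoid presented by generators a_0, a_1, a_2, … subject to the relations a_i a_j = a_{j+1} a_i for all i ≤ j. Then every element w ∈ S has a unique normal form: there is exactly one finite weakly increasing sequence α(1) ≤ α(2) ≤ … ≤ α(n) of natural numbers (n ≥ 0) such that w = a_{α(1)} a_{α(2)} ⋯ a_{α(n)} (the empty product being the identity). -/

import Mathlib

/-- The defining relations of Kruml's monoid: `aᵢ aⱼ = a_{j+1} aᵢ` for all `i ≤ j`,
as a relation on the free monoid on `ℕ`. -/
inductive KrumlRel : FreeMonoid ℕ → FreeMonoid ℕ → Prop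
  | rel (i j : ℕ) : i ≤ j →
      KrumlRel (FreeMonoid.of i * FreeMonoid.of j) (FreeMonoid.of (j + 1) * FreeMonoid.of i)

/-- Kruml's monoid `S = ⟨a₀, a₁, a₂, … ∣ aᵢaⱼ = a_{j+1}aᵢ for i ≤ j⟩`:
the quotient of the free monoid on `ℕ` by the congruence generated by the relations. -/
abbrev KrumlMonoid : Type := (conGen KrumlRel).Quotient

/-- The generator `aᵢ` of Kruml's monoid. -/
def a (i : ℕ) : KrumlMonoid := Con.mk' (conGen KrumlRel) (FreeMonoid.of i)

namespace Kruml

/-- Insert a generator index on the left of a (sorted) word, using the rewrite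
`aᵢ aⱼ = aⱼ a_{i-1}` when `i > j`. -/
def ins : ℕ → List ℕ → List ℕ
  | i, [] => [i]
  | i, j :: l => if i ≤ j then i :: j :: l else j :: ins (i-1) l

lemma ins_lb {c i : ℕ} {l : List ℕ} (h1 : c ≤ i) (h2 : ∀ y ∈ l, c ≤ y) :
    ∀ x ∈ ins i l, c ≤ x := by
  induction l generalizing i with
  | nil => simpa [ins] using h1
  | cons j t ih =>
    intro x hx
    simp only [ins] at hx
    split_ifs at hx with hij
    · simp only [List.mem_cons] at hx
      rcases hx with rfl | rfl | hx
      · exact h1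
      · exact h2 x (by simp)
      · exact h2 x (by simp [hx])
    · simp only [List.mem_cons] at hx
      rcases hx with rfl | hx
      · exact h2 x (by simp)
      · have hcj : c ≤ j := h2 j (by simp)
        exact ih (by omega) (fun y hy => h2 y (by simp [hy])) x hx

lemma sorted_ins {l : List ℕ} (i : ℕ) (hl : l.Pairwise (· ≤ ·)) :
    (ins i l).Pairwise (· ≤ ·) := by
  induction l generalizing i with
  | nil => simp [ins]
  | cons j t ih =>
    rw [List.pairwise_cons] at hl
    simp only [ins]
    split_ifs with hij
    · refine List.pairwise_cons.2 ⟨?_, List.pairwise_cons.2 hl⟩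
      intro b hb
      simp only [List.mem_cons] at hb
      rcases hb with rfl | hb
      · exact hij
      · exact le_trans hij (hl.1 b hb)
    · exact List.pairwise_cons.2 ⟨ins_lb (by omega) hl.1, ih (i-1) hl.2⟩

lemma ins_of_sorted_cons {i : ℕ} {l : List ℕ} (h : (i :: l).Pairwise (· ≤ ·)) :
    ins i l = i :: l := by
  cases l with
  | nil => rfl
  | cons j t =>
    have : i ≤ j := (List.pairwise_cons.1 h).1 j (by simp)
    simp [ins, this]

/-- The exchange law. -/
lemma ins_exchange {l : List ℕ} (hl : l.Pairwise (· ≤ ·)) {i j : ℕ} (hij : i ≤ j) :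
    ins i (ins j l) = ins (j+1) (ins i l) := by
  induction l generalizing i j with
  | nil => simp [ins, hij, show ¬ j + 1 ≤ i by omega]
  | cons k t ih =>
    rw [List.pairwise_cons] at hl
    by_cases hjk : j ≤ k
    · have hik : i ≤ k := le_trans hij hjk
      simp [ins, hjk, hik, hij, show ¬ j + 1 ≤ i by omega]
    · by_cases hik : i ≤ k
      · simp [ins, hjk, hik, show ¬ j + 1 ≤ i by omega]
      · have e1 : ins j (k :: t) = k :: ins (j-1) t := by simp [ins, hjk]
        have e2 : ins i (k :: t) = k :: ins (i-1) t := by simp [ins, hik]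
        have e3 : ins i (k :: ins (j-1) t) = k :: ins (i-1) (ins (j-1) t) := by
          simp [ins, hik]
        have e4 : ins (j+1) (k :: ins (i-1) t) = k :: ins j (ins (i-1) t) := by
          have : ¬ j + 1 ≤ k := by omega
          simp [ins, this]
        rw [e1, e2, e3, e4, ih hl.2 (show i - 1 ≤ j - 1 by omega),
          show j - 1 + 1 = j by omega]

lemma sorted_foldr {k : List ℕ} (hk : k.Pairwise (· ≤ ·)) (l : List ℕ) :
    (l.foldr ins k).Pairwise (· ≤ ·) := by
  induction l with
  | nil => exact hk
  | cons i t ih => exact sorted_ins i ih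

/-- Folding `ins` over an `ins`-result is the same as folding over the original word. -/
lemma foldr_ins {k : List ℕ} (hk : k.Pairwise (· ≤ ·)) (i : ℕ) (l : List ℕ) :
    (ins i l).foldr ins k = ins i (l.foldr ins k) := by
  induction l generalizing i with
  | nil => rfl
  | cons j t ih =>
    simp only [ins]
    split_ifs with hij
    · rfl
    · simp only [List.foldr_cons, ih]
      rw [ins_exchange (sorted_foldr hk t) (show j ≤ i - 1 by omega),
        show i - 1 + 1 = i by omega]

lemma foldr_nf {k : List ℕ} (hk : k.Pairwise (· ≤ ·)) (l : List ℕ) :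
    (l.foldr ins []).foldr ins k = l.foldr ins k := by
  induction l with
  | nil => rfl
  | cons i t ih =>
    simp only [List.foldr_cons, foldr_ins hk, ih]

/-- Normal form of a word. -/
def nf (x : FreeMonoid ℕ) : List ℕ := x.toList.foldr ins []

lemma nf_sorted (x : FreeMonoid ℕ) : (nf x).Pairwise (· ≤ ·) :=
  sorted_foldr (by simp) _

lemma nf_of_sorted {l : List ℕ} (hl : l.Pairwise (· ≤ ·)) : l.foldr ins [] = l := by
  induction l with
  | nil => rfl
  | cons i t ih =>
    rw [List.pairwise_cons] at hl
    simp only [List.foldr_cons, ih hl.2]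
    exact ins_of_sorted_cons (List.pairwise_cons.2 hl)

/-- The congruence "same normal form". -/
def nfCon : Con (FreeMonoid ℕ) where
  r x y := nf x = nf y
  iseqv := ⟨fun _ => rfl, Eq.symm, Eq.trans⟩
  mul' := by
    intro w x y z h1 h2
    show nf (w * y) = nf (x * z)
    unfold nf at *
    rw [FreeMonoid.toList_mul, FreeMonoid.toList_mul, List.foldr_append, List.foldr_append,
      ← foldr_nf (sorted_foldr (by simp) _), h1, h2, foldr_nf (sorted_foldr (by simp) _)]

lemma key {x y : FreeMonoid ℕ} (h : (conGen KrumlRel) x y) : nf x = nf y := by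
  have hle : conGen KrumlRel ≤ nfCon := by
    refine (Con.conGen_le).2 ?_
    intro x y hr
    obtain ⟨i, j, hij⟩ := hr
    show nf _ = nf _
    simp [nf, ins, hij, show ¬ j + 1 ≤ i by omega]
  exact Con.le_def.1 hle h

lemma a_rel {i j : ℕ} (h : i ≤ j) : a i * a j = a (j+1) * a i := by
  have h1 : (conGen KrumlRel) (FreeMonoid.of i * FreeMonoid.of j)
      (FreeMonoid.of (j+1) * FreeMonoid.of i) := ConGen.Rel.of _ _ (KrumlRel.rel i j h)
  have h2 : Con.mk' (conGen KrumlRel) (FreeMonoid.of i * FreeMonoid.of j) =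
      Con.mk' (conGen KrumlRel) (FreeMonoid.of (j+1) * FreeMonoid.of i) := (Con.eq _).2 h1
  simpa [a, map_mul] using h2

lemma prod_map_a (l : List ℕ) :
    (l.map a).prod = Con.mk' (conGen KrumlRel) (FreeMonoid.ofList l) := by
  induction l with
  | nil => rfl
  | cons i t ih =>
    have e : FreeMonoid.ofList (i :: t) = FreeMonoid.of i * FreeMonoid.ofList t := rfl
    simp [e, ih, a]

lemma prod_ins (i : ℕ) (l : List ℕ) :
    ((ins i l).map a).prod = a i * (l.map a).prod := by
  induction l generalizing i with
  | nil => simp [ins]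
  | cons j t ih =>
    simp only [ins]
    split_ifs with hij
    · simp
    · simp only [List.map_cons, List.prod_cons, ih]
      rw [← mul_assoc, ← mul_assoc]
      congr 1
      have := a_rel (show j ≤ i - 1 by omega)
      rwa [show i - 1 + 1 = i by omega] at this

lemma prod_nf (x : FreeMonoid ℕ) :
    ((nf x).map a).prod = Con.mk' (conGen KrumlRel) x := by
  rw [show x = FreeMonoid.ofList x.toList from rfl, ← prod_map_a]
  show (((FreeMonoid.toList x).foldr ins []).map a).prod = _
  induction x.toList with
  | nil => rfl
  | cons i t ih => simp [prod_ins, ih]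

end Kruml

/-- Every element `w` of `S` has a unique normal form `w = a_{α(1)} ⋯ a_{α(n)}` with
`α(1) ≤ α(2) ≤ … ≤ α(n)` (the empty product, `n = 0`, being the identity): there is exactly
one weakly increasing finite sequence (list) of natural numbers whose corresponding product
of generators equals `w`. -/
theorem krumlMonoid_unique_normal_form (w : KrumlMonoid) :
    ∃! l : List ℕ, l.Pairwise (· ≤ ·) ∧ (l.map a).prod = w := by
  obtain ⟨x, rfl⟩ := Con.mk'_surjective w
  refine ⟨Kruml.nf x, ⟨Kruml.nf_sorted x, Kruml.prod_nf x⟩, ?_⟩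
  rintro l ⟨hs, hp⟩
  rw [Kruml.prod_map_a] at hp
  have h := Kruml.key ((Con.eq _).1 hp)
  have h2 : Kruml.nf (FreeMonoid.ofList l) = l := by
    show (FreeMonoid.toList (FreeMonoid.ofList l)).foldr Kruml.ins [] = l
    rw [FreeMonoid.toList_ofList]
    exact Kruml.nf_of_sorted hs
  rw [← h, h2]
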